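/- The ω-language ab*a(a+b)^ω = {x ∈ {a,b}^ω : x₀ = a and there is n ≥ 1 with xᵢ = b for all 1 ≤ i < n and xₙ = a} belongs to DFA(𝕃') but does not belong to CFA(𝕃'). -/

import Mathlib

open Set

/-- A finite automaton used for recognizing ω-words over the alphabet `A`:
a finite type of states, a transition relation, an initial state and an
acceptance table (a set of sets of states). -/
structure OFA (A : Type) : Type 1 where
  Q : Type
  [finQ : Finite Q]
  T : Q → A → Q → Prop
  q0 : Q
  Acc : Set (Set Q)

attribute [instance] OFA.finQ

namespace OFA

variable {A : Type}

/-- Deterministic automaton: at most one successor per state and letter. -/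
def Deterministic (M : OFA A) : Prop :=
  ∀ p a q q', M.T p a q → M.T p a q' → q = q'

/-- Complete automaton: at least one successor per state and letter. -/
def Complete (M : OFA A) : Prop :=
  ∀ p a, ∃ q, M.T p a q

/-- `p` is an initial infinite path of `M` with label `x`. -/
def InitPath (M : OFA A) (p : ℕ → M.Q) (x : ℕ → A) : Prop :=
  p 0 = M.q0 ∧ ∀ i, M.T (p i) (x i) (p (i + 1))

/-- States visited at least once (at a positive index). -/
def runSet (M : OFA A) (p : ℕ → M.Q) : Set M.Q := {q | ∃ i, 0 < i ∧ p i = q}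

/-- States visited infinitely often. -/
def infSet (M : OFA A) (p : ℕ → M.Q) : Set M.Q := {q | ∀ n, ∃ i, n ≤ i ∧ p i = q}

/-- States visited finitely many times but at least once. -/
def finSet (M : OFA A) (p : ℕ → M.Q) : Set M.Q := M.runSet p \ M.infSet p

/-- States visited finitely many times or never. -/
def ninfSet (M : OFA A) (p : ℕ → M.Q) : Set M.Q := (M.infSet p)ᶜ

end OFA

/-- Selector for the set of states associated to a path. -/
inductive CSel | run | inf | fin | ninf

/-- Selector for the comparison relation with a member of the acceptance table. -/
inductive RSel | meet | sub | eq

def OFA.csel {A : Type} (M : OFA A) : CSel → (ℕ → M.Q) → Set M.Q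
  | .run => M.runSet
  | .inf => M.infSet
  | .fin => M.finSet
  | .ninf => M.ninfSet

def RSel.holds {Q : Type} : RSel → Set Q → Set Q → Prop
  | .meet => fun S F => (S ∩ F).Nonempty
  | .sub => fun S F => S ⊆ F
  | .eq => fun S F => S = F

/-- The ω-language accepted by `M` under the condition `(c, r)`. -/
def OFA.Lang {A : Type} (M : OFA A) (c : CSel) (r : RSel) : Set (ℕ → A) :=
  {x | ∃ p, M.InitPath p x ∧ ∃ F ∈ M.Acc, RSel.holds r (M.csel c p) F}

/-- The ω-language accepted by `M` under the condition 𝔸 : some `F ∈ Acc` with `F ⊆ run p`. -/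
def OFA.LangA {A : Type} (M : OFA A) : Set (ℕ → A) :=
  {x | ∃ p, M.InitPath p x ∧ ∃ F ∈ M.Acc, F ⊆ M.runSet p}

/-- The ω-language accepted by `M` under the condition 𝔸' : some `F ∈ Acc` with `F ⊈ run p`. -/
def OFA.LangA' {A : Type} (M : OFA A) : Set (ℕ → A) :=
  {x | ∃ p, M.InitPath p x ∧ ∃ F ∈ M.Acc, ¬ F ⊆ M.runSet p}

/-- The ω-language accepted by `M` under the condition 𝕃 : some `F ∈ Acc` with `F ⊆ inf p`. -/
def OFA.LangL {A : Type} (M : OFA A) : Set (ℕ → A) :=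
  {x | ∃ p, M.InitPath p x ∧ ∃ F ∈ M.Acc, F ⊆ M.infSet p}

/-- The ω-language accepted by `M` under the condition 𝕃' : some `F ∈ Acc` with `F ⊈ inf p`. -/
def OFA.LangL' {A : Type} (M : OFA A) : Set (ℕ → A) :=
  {x | ∃ p, M.InitPath p x ∧ ∃ F ∈ M.Acc, ¬ F ⊆ M.infSet p}

/-- The class of ω-languages of the form `L M` for automata `M` satisfying `P`. -/
def AutClass (A : Type) (P : OFA A → Prop) (L : (M : OFA A) → Set (ℕ → A)) :
    Set (Set (ℕ → A)) :=
  {X | ∃ M : OFA A, P M ∧ L M = X}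

/-- The finite factor `x_i x_{i+1} … x_{j-1}` of the ω-word `x`. -/
def extract {A : Type} (x : ℕ → A) (i j : ℕ) : List A :=
  (List.range (j - i)).map fun k => x (i + k)

/-- The ω-language `V · U^ω`: ω-words of the form `u₀u₁u₂⋯` with `u₀ ∈ V`
and all `uᵢ` (i ≥ 1) nonempty words of `U`, described via cut points. -/
def omegaPiece {A : Type} (V U : Language A) : Set (ℕ → A) :=
  {x | ∃ c : ℕ → ℕ, (∀ i, c i < c (i + 1)) ∧
    extract x 0 (c 0) ∈ V ∧ ∀ i, extract x (c i) (c (i + 1)) ∈ U}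

/-- An ω-language is ω-rational if it is a finite union `⋃ᵢ Vᵢ · Uᵢ^ω`
with all `Vᵢ`, `Uᵢ` rational (regular) languages of finite words. -/
def IsOmegaRat {A : Type} (L : Set (ℕ → A)) : Prop :=
  ∃ (n : ℕ) (V U : Fin n → Language A),
    (∀ i, (V i).IsRegular) ∧ (∀ i, (U i).IsRegular) ∧
    L = ⋃ i, omegaPiece (V i) (U i)

/-- Countable union of closed sets. -/
def IsFsigmaSet {X : Type*} [TopologicalSpace X] (S : Set X) : Prop :=
  ∃ f : ℕ → Set X, (∀ n, IsClosed (f n)) ∧ S = ⋃ n, f n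

/-- Countable intersection of open sets. -/
def IsGdeltaSet {X : Type*} [TopologicalSpace X] (S : Set X) : Prop :=
  ∃ f : ℕ → Set X, (∀ n, IsOpen (f n)) ∧ S = ⋂ n, f n

/-- Auxiliary: splicing an initial path with a path continuing from its `m`-th state. -/
lemma splice_initPath {A : Type} (M : OFA A) (p : ℕ → M.Q) (x : ℕ → A)
    (hp : M.InitPath p x) (m : ℕ) (t : ℕ → M.Q) (z : ℕ → A)
    (ht0 : t 0 = p m) (htT : ∀ d, M.T (t d) (z d) (t (d + 1))) :
    M.InitPath (fun n => if n < m then p n else t (n - m))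
      (fun n => if n < m then x n else z (n - m)) := by
  constructor
  · by_cases h : 0 < m
    · simp [h, hp.1]
    · have hm : m = 0 := by omega
      simp [hm, ht0, hp.1]
  · intro n
    by_cases h1 : n + 1 < m
    · have h2 : n < m := by omega
      simpa [h1, h2] using hp.2 n
    · by_cases h2 : n < m
      · have h3 : n + 1 = m := by omega
        have := hp.2 n
        simp only [h1, h2, if_true, if_false, if_neg, if_pos]
        have h4 : n + 1 - m = 0 := by omega
        rw [h4, ht0, ← h3]
        exact this
      · have h4 : n + 1 - m = (n - m) + 1 := by omega
        simp only [h1, h2, if_false]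
        rw [h4]
        exact htT (n - m)

/-- The 3-state deterministic automaton recognizing `ab*a(a+b)^ω` under 𝕃'. -/
@[reducible] def M1 : OFA Bool where
  Q := Fin 3
  T p a q := (p = 0 ∧ a = true ∧ q = 1) ∨ (p = 1 ∧ a = false ∧ q = 1) ∨
    (p = 1 ∧ a = true ∧ q = 2) ∨ (p = 2 ∧ q = 2)
  q0 := 0
  Acc := {{1}}

lemma M1_det : M1.Deterministic := by
  have : ∀ (p : Fin 3) (a : Bool) (q q' : Fin 3),
      ((p = 0 ∧ a = true ∧ q = 1) ∨ (p = 1 ∧ a = false ∧ q = 1) ∨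
        (p = 1 ∧ a = true ∧ q = 2) ∨ (p = 2 ∧ q = 2)) →
      ((p = 0 ∧ a = true ∧ q' = 1) ∨ (p = 1 ∧ a = false ∧ q' = 1) ∨
        (p = 1 ∧ a = true ∧ q' = 2) ∨ (p = 2 ∧ q' = 2)) → q = q' := by decide
  exact this

lemma M1_lang : M1.LangL' =
    {x : ℕ → Bool | x 0 = true ∧ ∃ n, 1 ≤ n ∧ (∀ i, 1 ≤ i → i < n → x i = false) ∧ x n = true} := by
  ext x
  constructor
  · rintro ⟨p, ⟨hp0, hpT⟩, F, hF, hns⟩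
    have hF' : F = {1} := hF
    subst hF'
    have h1 : (1 : Fin 3) ∉ M1.infSet p := fun h => hns (Set.singleton_subset_iff.mpr h)
    have h1' : ∃ N, ∀ i, N ≤ i → p i ≠ 1 := by
      by_contra h
      push_neg at h
      exact h1 (fun n => h n)
    obtain ⟨N, hN⟩ := h1'
    have htgt : ∀ i, p (i + 1) = 1 ∨ p (i + 1) = 2 := by
      intro i
      rcases hpT i with ⟨_, _, h⟩ | ⟨_, _, h⟩ | ⟨_, _, h⟩ | ⟨_, h⟩ <;> simp [h]
    have hx0 : x 0 = true ∧ p 1 = 1 := by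
      rcases hpT 0 with ⟨h, ha, hq⟩ | ⟨h, _, _⟩ | ⟨h, _, _⟩ | ⟨h, _⟩ <;>
        rw [hp0] at h <;> first | exact ⟨ha, hq⟩ | exact absurd h (by decide)
    have hex : ∃ m, p (m + 1) = 2 := by
      rcases htgt (max N 1) with h | h
      · exact absurd h (hN _ (by omega))
      · exact ⟨max N 1, h⟩
    set n := Nat.find hex with hn
    have hn2 : p (n + 1) = 2 := Nat.find_spec hex
    have hnmin : ∀ m, m < n → p (m + 1) ≠ 2 := fun m hm => Nat.find_min hex hm
    have hone : ∀ i, 1 ≤ i → i ≤ n → p i = 1 := by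
      intro i hi1 hin
      obtain ⟨m, rfl⟩ : ∃ m, i = m + 1 := ⟨i - 1, by omega⟩
      rcases htgt m with h | h
      · exact h
      · exact absurd h (hnmin m (by omega))
    have hn1 : 1 ≤ n := by
      by_contra h
      have : n = 0 := by omega
      rw [this] at hn2
      rw [hx0.2] at hn2
      exact absurd hn2 (by decide)
    refine ⟨hx0.1, n, hn1, ?_, ?_⟩
    · intro i hi1 hin
      have hpi : p i = 1 := hone i hi1 (by omega)
      have hpi1 : p (i + 1) = 1 := hone (i + 1) (by omega) (by omega)
      rcases hpT i with ⟨h, _, _⟩ | ⟨_, ha, _⟩ | ⟨_, _, h⟩ | ⟨h, _⟩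
      · rw [hpi] at h; exact absurd h (by decide)
      · exact ha
      · rw [hpi1] at h; exact absurd h (by decide)
      · rw [hpi] at h; exact absurd h (by decide)
    · have hpn : p n = 1 := hone n hn1 le_rfl
      rcases hpT n with ⟨h, _, _⟩ | ⟨_, _, h⟩ | ⟨_, ha, _⟩ | ⟨h, _⟩
      · rw [hpn] at h; exact absurd h (by decide)
      · rw [hn2] at h; exact absurd h (by decide)
      · exact ha
      · rw [hpn] at h; exact absurd h (by decide)
  · rintro ⟨hx0, n, hn1, hb, hxn⟩
    set p : ℕ → Fin 3 := fun i => if i = 0 then 0 else if i ≤ n then 1 else 2 with hpd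
    have hq0 : p 0 = 0 := by rw [hpd]; simp
    have hq1 : ∀ i, 1 ≤ i → i ≤ n → p i = 1 := by
      intro i h1 h2
      rw [hpd]
      simp only
      rw [if_neg (by omega), if_pos h2]
    have hq2 : ∀ i, n < i → p i = 2 := by
      intro i h
      rw [hpd]
      simp only
      rw [if_neg (by omega), if_neg (by omega)]
    refine ⟨p, ⟨hq0, ?_⟩, {1}, rfl, ?_⟩
    · intro i
      show (p i = 0 ∧ x i = true ∧ p (i + 1) = 1) ∨ (p i = 1 ∧ x i = false ∧ p (i + 1) = 1) ∨
        (p i = 1 ∧ x i = true ∧ p (i + 1) = 2) ∨ (p i = 2 ∧ p (i + 1) = 2)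
      rcases Nat.lt_trichotomy i n with hlt | rfl | hgt
      · rcases Nat.eq_zero_or_pos i with rfl | hi1
        · exact Or.inl ⟨hq0, hx0, hq1 1 le_rfl hn1⟩
        · exact Or.inr (Or.inl ⟨hq1 i hi1 (by omega), hb i hi1 hlt, hq1 (i + 1) (by omega) (by omega)⟩)
      · exact Or.inr (Or.inr (Or.inl ⟨hq1 i hn1 le_rfl, hxn, hq2 (i + 1) (by omega)⟩))
      · exact Or.inr (Or.inr (Or.inr ⟨hq2 i hgt, hq2 (i + 1) (by omega)⟩))
    · intro hsub
      have h1 : (1 : Fin 3) ∈ M1.infSet p := hsub rfl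
      obtain ⟨i, hi, hpi⟩ := h1 (n + 1)
      rw [hq2 i (by omega)] at hpi
      exact absurd hpi (by decide)

/-- Over the alphabet `Bool` we take `a := true` and `b := false`.
`ab*a(a+b)^ω` is the set of ω-words starting with `a`, followed by a (possibly
empty) block of `b`'s, followed by an `a`. It is in DFA(𝕃') but not in CFA(𝕃'). -/
theorem stmt_12 :
    {x : ℕ → Bool | x 0 = true ∧ ∃ n, 1 ≤ n ∧ (∀ i, 1 ≤ i → i < n → x i = false) ∧ x n = true} ∈ AutClass Bool OFA.Deterministic OFA.LangL' ∧
    {x : ℕ → Bool | x 0 = true ∧ ∃ n, 1 ≤ n ∧ (∀ i, 1 ≤ i → i < n → x i = false) ∧ x n = true} ∉ AutClass Bool OFA.Complete OFA.LangL' := by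
  constructor
  · exact ⟨M1, M1_det, M1_lang⟩
  · rintro ⟨M, hC, hL⟩
    haveI : Fintype M.Q := Fintype.ofFinite M.Q
    set k := Fintype.card M.Q with hk
    choose f hf using hC
    set y : ℕ → Bool := fun m => decide (m = 0 ∨ m = k + 1) with hy
    have hyL : y ∈ M.LangL' := by
      rw [hL]
      refine ⟨by simp [hy], k + 1, by omega, ?_, by simp [hy]⟩
      intro i h1 h2
      simp only [hy, decide_eq_false_iff_not]
      omega
    obtain ⟨p, hp, F, hF, hns⟩ := hyL
    obtain ⟨q, hqF, hqi⟩ := Set.not_subset.mp hns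
    -- any initial path labelled by a word outside the language visits `q` infinitely often
    have hrej : ∀ (w : ℕ → Bool) (c : ℕ → M.Q), M.InitPath c w →
        (w 0 = false ∨ ∀ n, 1 ≤ n → w n = false) → q ∈ M.infSet c := by
      intro w c hc hw
      by_contra hq
      have hwM : w ∈ M.LangL' := ⟨c, hc, F, hF, fun hsub => hq (hsub hqF)⟩
      rw [hL] at hwM
      obtain ⟨h0, n, hn1, _, hxn⟩ := hwM
      rcases hw with h | h
      · rw [h0] at h; exact absurd h (by decide)
      · rw [h n hn1] at hxn; exact absurd hxn (by decide)
    -- the all-b path from the initial state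
    set r : ℕ → M.Q := fun n => Nat.rec M.q0 (fun _ s => f s false) n with hr
    have hrT : ∀ n, M.T (r n) false (r (n + 1)) := fun n => hf (r n) false
    have hrI : M.InitPath r (fun _ => false) := ⟨rfl, hrT⟩
    obtain ⟨t0, ht01, hrt0⟩ := hrej _ _ hrI (Or.inl rfl) 1
    -- the accepting path never visits q
    have hpq : ∀ m, p m ≠ q := by
      intro m hm
      have hsp := splice_initPath M r (fun _ => false) hrI t0
        (fun d => p (m + d)) (fun d => y (m + d))
        (by simp [hrt0, hm]) (fun d => hp.2 (m + d))
      have hq' := hrej _ _ hsp (Or.inl (by simp [show 0 < t0 by omega]))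
      apply hqi
      intro n
      obtain ⟨i, hi, hci⟩ := hq' (n + t0 + m)
      refine ⟨m + (i - t0), by omega, ?_⟩
      simpa [show ¬ i < t0 by omega] using hci
    -- pigeonhole on positions 1..k+1
    have hpig : ∃ i j, 1 ≤ i ∧ i < j ∧ j ≤ k + 1 ∧ p i = p j := by
      have hcard : (Finset.univ : Finset M.Q).card < (Finset.Icc 1 (k + 1)).card := by
        simp [Nat.card_Icc, hk]
      obtain ⟨i, hi, j, hj, hne, heq⟩ :=
        Finset.exists_ne_map_eq_of_card_lt_of_maps_to hcard
          (fun i (_ : i ∈ Finset.Icc 1 (k + 1)) => Finset.mem_univ (p i))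
      rw [Finset.mem_Icc] at hi hj
      rcases lt_or_gt_of_ne hne with h | h
      · exact ⟨i, j, hi.1, h, hj.2, heq⟩
      · exact ⟨j, i, hj.1, h, hi.2, heq.symm⟩
    obtain ⟨i, j, hi1, hij, hjk, hpij⟩ := hpig
    -- the index function looping on the cycle
    set t : ℕ → ℕ := fun d => Nat.rec i (fun _ s => if s + 1 = j then i else s + 1) d with ht
    have htinv : ∀ d, 1 ≤ t d ∧ i ≤ t d ∧ t d < j := by
      intro d
      induction d with
      | zero => exact ⟨hi1, le_rfl, hij⟩
      | succ d ih =>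
        have hstep : t (d + 1) = if t d + 1 = j then i else t d + 1 := rfl
        rw [hstep]
        split_ifs with hc
        · exact ⟨hi1, le_rfl, hij⟩
        · omega
    have htT : ∀ d, M.T (p (t d)) false (p (t (d + 1))) := by
      intro d
      have hv := htinv d
      have h := hp.2 (t d)
      have hyf : y (t d) = false := by
        simp only [hy, decide_eq_false_iff_not]
        omega
      rw [hyf] at h
      show M.T (p (t d)) false (p (if t d + 1 = j then i else t d + 1))
      split_ifs with hc
      · rw [hpij, ← hc]; exact h
      · exact h
    have hsp3 := splice_initPath M p y hp i (fun d => p (t d)) (fun _ => false)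
      (by simp [ht]) htT
    have hq3 := hrej _ _ hsp3 (by
      right
      intro n hn
      by_cases h : n < i
      · simp only [if_pos h, hy, decide_eq_false_iff_not]
        omega
      · simp [h])
    obtain ⟨m, _, hcm⟩ := hq3 0
    by_cases h : m < i
    · simp only [if_pos h] at hcm
      exact hpq m hcm
    · simp only [if_neg h] at hcm
      exact hpq (t (m - i)) hcm
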